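/- Let T be a polynomial of degree n ≥ 1 with real coefficients, having n simple real zeros, and such that |T(z)| ≥ 1 at every critical point z of T. Then T⁻¹([−1,1]) ⊆ ℝ, i.e., every complex z with T(z) ∈ [−1,1] is real. -/

import Mathlib

open Polynomial

lemma key_count (T : ℝ[X]) (n : ℕ) (hn : 1 ≤ n) (r : ℝ) (hr1 : -1 ≤ r) (hr2 : r ≤ 1)
    (p : ℕ → ℝ)
    (hmono : ∀ i < n, p i < p (i + 1))
    (hmag : ∀ i ≤ n, 1 ≤ |T.eval (p i)|)
    (halt : ∀ i < n, T.eval (p i) * T.eval (p (i + 1)) < 0)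
    (hderiv : ∀ i, 0 < i → i < n → (derivative T).eval (p i) = 0)
    (hQ : T - C r ≠ 0) :
    n ≤ Multiset.card (T - C r).roots := by
  classical
  set Q : ℝ[X] := T - C r with hQdef
  have hQev : ∀ x, Q.eval x = T.eval x - r := by intro x; simp [hQdef]
  -- monotonicity of p up to n
  have hpmono : ∀ i j : ℕ, i < j → j ≤ n → p i < p j := by
    intro i j hij hjn
    induction j with
    | zero => omega
    | succ k ih =>
      rcases Nat.lt_or_ge i k with h | h
      · exact lt_trans (ih h (by omega)) (hmono k (by omega))
      · have : i = k := by omega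
        subst this
        exact hmono i (by omega)
  -- a root in each interval
  have hch : ∀ i : Fin n, ∃ c, p i ≤ c ∧ c ≤ p (i + 1) ∧ Q.eval c = 0 := by
    intro ⟨i, hi⟩
    simp only
    have h1 := hmag i (by omega)
    have h2 := hmag (i + 1) (by omega)
    have h3 := halt i hi
    have hle : p i ≤ p (i + 1) := (hmono i hi).le
    have hc : ContinuousOn (fun x => Q.eval x) (Set.Icc (p i) (p (i + 1))) :=
      (Q.continuous).continuousOn
    rcases le_or_gt (T.eval (p i)) 0 with hneg | hpos
    · have hA : T.eval (p i) ≤ -1 := by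
        cases abs_cases (T.eval (p i)) with
        | inl h => nlinarith [h.1, h.2]
        | inr h => nlinarith [h.1, h.2]
      have hB : 1 ≤ T.eval (p (i + 1)) := by
        cases abs_cases (T.eval (p (i + 1))) with
        | inl h => nlinarith
        | inr h => nlinarith
      have : (0 : ℝ) ∈ Set.Icc (Q.eval (p i)) (Q.eval (p (i + 1))) := by
        constructor <;> rw [hQev] <;> nlinarith
      obtain ⟨c, hc1, hc2⟩ := intermediate_value_Icc hle hc this
      exact ⟨c, hc1.1, hc1.2, hc2⟩
    · have hA : 1 ≤ T.eval (p i) := by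
        cases abs_cases (T.eval (p i)) with
        | inl h => nlinarith
        | inr h => nlinarith
      have hB : T.eval (p (i + 1)) ≤ -1 := by
        cases abs_cases (T.eval (p (i + 1))) with
        | inl h => nlinarith
        | inr h => nlinarith
      have : (0 : ℝ) ∈ Set.Icc (Q.eval (p (i + 1))) (Q.eval (p i)) := by
        constructor <;> rw [hQev] <;> nlinarith
      obtain ⟨c, hc1, hc2⟩ := intermediate_value_Icc' hle hc this
      exact ⟨c, hc1.1, hc1.2, hc2⟩
  set c : Fin n → ℝ := fun i => (hch i).choose with hcdef
  have hcl : ∀ i : Fin n, p i ≤ c i := fun i => (hch i).choose_spec.1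
  have hcr : ∀ i : Fin n, c i ≤ p ((i : ℕ) + 1) := fun i => (hch i).choose_spec.2.1
  have hcz : ∀ i : Fin n, Q.eval (c i) = 0 := fun i => (hch i).choose_spec.2.2
  -- key ordering fact
  have ford : ∀ i j : Fin n, (i : ℕ) < j → c i = c j → (j : ℕ) = i + 1 ∧ c i = p ((i : ℕ) + 1) := by
    intro i j hij hcij
    have hj : (j : ℕ) ≤ n := le_of_lt j.isLt
    have h1 : c i ≤ p ((i : ℕ) + 1) := hcr i
    have h2 : p (j : ℕ) ≤ c j := hcl j
    have hji : (j : ℕ) = (i : ℕ) + 1 := by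
      by_contra h
      have h3 : p ((i : ℕ) + 1) < p (j : ℕ) := hpmono _ _ (by omega) hj
      have : c i < c j := lt_of_le_of_lt h1 (lt_of_lt_of_le h3 h2)
      exact absurd hcij (ne_of_lt this)
    refine ⟨hji, le_antisymm h1 ?_⟩
    rw [hcij]
    rw [hji] at h2
    exact h2
  have hadj : ∀ i j : Fin n, i ≠ j → c i = c j → ((i : ℕ) = j + 1 ∨ (j : ℕ) = i + 1) := by
    intro i j hne hc
    rcases lt_trichotomy (i : ℕ) (j : ℕ) with h | h | h
    · exact Or.inr (ford i j h hc).1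
    · exact absurd (Fin.ext h) hne
    · exact Or.inl (ford j i h hc.symm).1
  -- the multiset of found roots
  have hle : Multiset.map c Finset.univ.val ≤ Q.roots := by
    rw [Multiset.le_iff_count]
    intro x
    rw [Multiset.count_map, count_roots]
    have hfilt : (Multiset.filter (fun a => x = c a) Finset.univ.val).card
        = (Finset.univ.filter (fun a => x = c a)).card := rfl
    rw [hfilt]
    set F := Finset.univ.filter (fun a => x = c a) with hF
    have hmemF : ∀ i, i ∈ F ↔ x = c i := by
      intro i; simp [hF]
    rcases Nat.lt_or_ge F.card 1 with h0 | h1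
    · omega
    rcases Nat.lt_or_ge F.card 2 with hc1 | hc2
    · -- card = 1 : x is a root
      have : F.card = 1 := by omega
      obtain ⟨i, hi⟩ := Finset.card_eq_one.mp this
      have hxi : x = c i := (hmemF i).1 (by rw [hi]; exact Finset.mem_singleton_self i)
      have : 0 < Q.rootMultiplicity x := by
        rw [rootMultiplicity_pos hQ]
        rw [hxi]; exact hcz i
      omega
    · -- card ≥ 2
      have hcard2 : F.card ≤ 2 := by
        by_contra h
        obtain ⟨i, j, k, hi, hj, hk, hij, hik, hjk⟩ :=
          Finset.two_lt_card_iff.mp (show 2 < F.card by omega)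
        have h1 := hadj i j hij ((hmemF i).1 hi ▸ (hmemF j).1 hj)
        have h2 := hadj i k hik ((hmemF i).1 hi ▸ (hmemF k).1 hk)
        have h3 := hadj j k hjk ((hmemF j).1 hj ▸ (hmemF k).1 hk)
        have hij' : (i : ℕ) ≠ j := fun h => hij (Fin.ext h)
        have hik' : (i : ℕ) ≠ k := fun h => hik (Fin.ext h)
        have hjk' : (j : ℕ) ≠ k := fun h => hjk (Fin.ext h)
        rcases h1 with h1 | h1 <;> rcases h2 with h2 | h2 <;> rcases h3 with h3 | h3 <;> omega
      -- multiplicity at least 2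
      obtain ⟨i, hi, j, hj, hij⟩ := Finset.one_lt_card.mp (by omega : 1 < F.card)
      have hxi : x = c i := (hmemF i).1 hi
      have hxj : x = c j := (hmemF j).1 hj
      -- get the ordered pair
      have hkey : ∃ m : ℕ, 0 < m ∧ m < n ∧ x = p m := by
        rcases lt_trichotomy (i : ℕ) (j : ℕ) with h | h | h
        · obtain ⟨h4, h5⟩ := ford i j h (hxi ▸ hxj)
          exact ⟨(i : ℕ) + 1, by omega, by have := j.isLt; omega, by rw [hxi, h5]⟩
        · exact absurd (Fin.ext h) hij
        · obtain ⟨h4, h5⟩ := ford j i h (hxj ▸ hxi)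
          exact ⟨(j : ℕ) + 1, by omega, by have := i.isLt; omega, by rw [hxj, h5]⟩
      obtain ⟨m, hm0, hmn, hxm⟩ := hkey
      have hmult : 1 < Q.rootMultiplicity x := by
        apply lt_rootMultiplicity_of_isRoot_iterate_derivative hQ
        intro k hk
        interval_cases k
        · rw [Function.iterate_zero]; rw [hxi]; exact hcz i
        · rw [Function.iterate_one]
          have : derivative Q = derivative T := by simp [hQdef]
          rw [this]
          show (derivative T).eval x = 0
          rw [hxm]
          exact hderiv m hm0 hmn
      omega
  have := Multiset.card_le_card hle
  simpa using this

theorem inverse_image_real (T : Polynomial ℝ) (n : ℕ) (hn : 1 ≤ n)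
    (hdeg : T.natDegree = n)
    (hroots : ∃ S : Finset ℝ, S.card = n ∧ ∀ x ∈ S, T.eval x = 0)
    (hcrit : ∀ z : ℂ, (derivative (T.map (algebraMap ℝ ℂ))).eval z = 0 →
      1 ≤ ‖(T.map (algebraMap ℝ ℂ)).eval z‖) :
    ∀ z : ℂ, (∃ r : ℝ, (T.map (algebraMap ℝ ℂ)).eval z = (r : ℂ) ∧ -1 ≤ r ∧ r ≤ 1) →
      z.im = 0 := by
  classical
  rintro z ⟨r, hz, hr1, hr2⟩
  obtain ⟨S, hScard, hSroot⟩ := hroots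
  have hT0 : T ≠ 0 := by
    intro h
    rw [h, natDegree_zero] at hdeg
    omega
  -- roots of T are exactly S
  have hSval : S.val ≤ T.roots := by
    rw [Multiset.le_iff_subset S.nodup]
    intro x hx
    rw [mem_roots hT0]
    exact hSroot x hx
  have hcards : Multiset.card T.roots = n := by
    have h1 : Multiset.card T.roots ≤ n := hdeg ▸ T.card_roots'
    have h2 : n ≤ Multiset.card T.roots := by
      have h3 := Multiset.card_le_card hSval
      have h4 : Multiset.card S.val = n := by rw [← Finset.card_def, hScard]
      omega
    omega
  have hTroots : T.roots = S.val :=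
    (Multiset.eq_of_le_of_card_le hSval (by rw [hcards]; exact le_of_eq hScard.symm)).symm
  -- sorted roots
  set a : Fin n → ℝ := fun i => ((S.orderIsoOfFin hScard i : ℝ)) with hadef
  have hamono : StrictMono a := by
    intro i j hij
    exact Subtype.coe_lt_coe.2 ((S.orderIsoOfFin hScard).lt_iff_lt.2 hij)
  have hamem : ∀ i, a i ∈ S := fun i => (S.orderIsoOfFin hScard i).2
  have haroot : ∀ i, T.eval (a i) = 0 := fun i => hSroot _ (hamem i)
  have himg : Multiset.map a Finset.univ.val = S.val := by
    apply Multiset.eq_of_le_of_card_le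
    · rw [Multiset.le_iff_subset ((Finset.univ.nodup).map hamono.injective)]
      intro x hx
      obtain ⟨i, _, rfl⟩ := Multiset.mem_map.1 hx
      exact hamem i
    · simp [hScard]
  have hlc : T.leadingCoeff ≠ 0 := leadingCoeff_ne_zero.2 hT0
  have hsplit : T.Splits :=
    splits_iff_card_roots.mpr (by rw [hcards, hdeg])
  have hTeq : ∀ x : ℝ, T.eval x = T.leadingCoeff * ∏ i, (x - a i) := by
    intro x
    conv_lhs => rw [hsplit.eq_prod_roots]
    rw [eval_mul, eval_C, eval_multiset_prod]
    congr 1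
    rw [hTroots, ← himg, Multiset.map_map, Multiset.map_map,
      Finset.prod_eq_multiset_prod]
    congr 1
    apply Multiset.map_congr rfl
    intro j _
    simp
  have habs : ∀ x : ℝ, |T.eval x| = |T.leadingCoeff| * ∏ i, |x - a i| := by
    intro x
    rw [hTeq, abs_mul, Finset.abs_prod]
  -- far away, |T| is big
  set K : ℝ := max 1 |T.leadingCoeff|⁻¹ with hKdef
  have hK1 : (1 : ℝ) ≤ K := le_max_left _ _
  have hlcpos : 0 < |T.leadingCoeff| := abs_pos.2 hlc
  have hfar : ∀ x : ℝ, (∀ i, K ≤ |x - a i|) → 1 ≤ |T.eval x| := by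
    intro x hx
    rw [habs]
    have h1 : K ^ n ≤ ∏ i, |x - a i| := by
      have := Finset.prod_le_prod (s := Finset.univ) (f := fun _ : Fin n => K)
        (g := fun i => |x - a i|) (fun i _ => by positivity) (fun i _ => hx i)
      simpa using this
    have h2 : K ≤ K ^ n := le_self_pow₀ (by linarith) (by omega)
    have h3 : |T.leadingCoeff|⁻¹ ≤ K := le_max_right _ _
    calc (1 : ℝ) = |T.leadingCoeff| * |T.leadingCoeff|⁻¹ := by
          field_simp
      _ ≤ |T.leadingCoeff| * ∏ i, |x - a i| := by
          apply mul_le_mul_of_nonneg_left _ hlcpos.le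
          linarith
  -- real version of the critical point hypothesis
  have hcritR : ∀ x : ℝ, (derivative T).eval x = 0 → 1 ≤ |T.eval x| := by
    intro x hx
    have h0 : ((x : ℂ)) = algebraMap ℝ ℂ x := rfl
    have h1 : (derivative (T.map (algebraMap ℝ ℂ))).eval (x : ℂ) = 0 := by
      rw [derivative_map, eval_map, h0, eval₂_at_apply, hx, map_zero]
    have h2 := hcrit (x : ℂ) h1
    rwa [eval_map, h0, eval₂_at_apply, Complex.coe_algebraMap, Complex.norm_real, Real.norm_eq_abs] at h2
  -- the alternating-sign points
  have hne : (Finset.univ : Finset (Fin n)).Nonempty :=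
    ⟨⟨0, by omega⟩, Finset.mem_univ _⟩
  set A : ℝ := Finset.univ.inf' hne a - K with hAdef
  set B : ℝ := Finset.univ.sup' hne a + K with hBdef
  have hAlt : ∀ j : Fin n, A + K ≤ a j := by
    intro j
    have h : Finset.univ.inf' hne a ≤ a j := Finset.inf'_le a (Finset.mem_univ j)
    rw [hAdef]; linarith
  have hBgt : ∀ j : Fin n, a j ≤ B - K := by
    intro j
    have h : a j ≤ Finset.univ.sup' hne a := Finset.le_sup' a (Finset.mem_univ j)
    rw [hBdef]; linarith
  have hex : ∀ i : ℕ, i ≤ n → ∃ x : ℝ,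
      (∀ j : Fin n, (j : ℕ) < i → a j < x) ∧ (∀ j : Fin n, i ≤ (j : ℕ) → x < a j) ∧
      1 ≤ |T.eval x| ∧ (0 < i → i < n → (derivative T).eval x = 0) := by
    intro i hi
    rcases Nat.eq_zero_or_pos i with rfl | hpos
    · refine ⟨A, fun j hj => by omega, fun j _ => ?_, ?_, by omega⟩
      · have := hAlt j; linarith
      · apply hfar
        intro j
        have := hAlt j
        rw [abs_sub_comm, abs_of_nonneg (by linarith)]
        linarith
    rcases Nat.lt_or_ge i n with hilt | hige
    · -- interior: Rolle
      have hi1 : i - 1 < n := by omega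
      have hii : i < n := hilt
      set u : Fin n := ⟨i - 1, hi1⟩ with hudef
      set v : Fin n := ⟨i, hii⟩ with hvdef
      have huv : a u < a v := hamono (by simp [hudef, hvdef, Fin.lt_def]; omega)
      obtain ⟨ξ, hξmem, hξ⟩ := exists_deriv_eq_zero huv
        (T.continuous.continuousOn) (by rw [haroot, haroot])
      have hξd : (derivative T).eval ξ = 0 := by
        rw [← Polynomial.deriv]; exact hξ
      refine ⟨ξ, fun j hj => ?_, fun j hj => ?_, hcritR ξ hξd, fun _ _ => hξd⟩
      · have : a j ≤ a u := hamono.monotone (by simp [hudef, Fin.le_def]; omega)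
        exact lt_of_le_of_lt this hξmem.1
      · have : a v ≤ a j := hamono.monotone (by simp [hvdef, Fin.le_def]; omega)
        exact lt_of_lt_of_le hξmem.2 this
    · -- i = n : right endpoint
      have hin : i = n := by omega
      refine ⟨B, fun j _ => ?_, fun j hj => by have := j.isLt; omega, ?_, by omega⟩
      · have := hBgt j; linarith
      · apply hfar
        intro j
        have := hBgt j
        rw [abs_of_nonneg (by linarith)]
        linarith
  set p : ℕ → ℝ := fun i => if h : i ≤ n then (hex i h).choose else 0 with hpdef
  have hp1 : ∀ i (h : i ≤ n), ∀ j : Fin n, (j : ℕ) < i → a j < p i := by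
    intro i h j hj
    rw [hpdef]; simp only [dif_pos h]
    exact (hex i h).choose_spec.1 j hj
  have hp2 : ∀ i (h : i ≤ n), ∀ j : Fin n, i ≤ (j : ℕ) → p i < a j := by
    intro i h j hj
    rw [hpdef]; simp only [dif_pos h]
    exact (hex i h).choose_spec.2.1 j hj
  have hp3 : ∀ i (h : i ≤ n), 1 ≤ |T.eval (p i)| := by
    intro i h
    rw [hpdef]; simp only [dif_pos h]
    exact (hex i h).choose_spec.2.2.1
  have hp4 : ∀ i (h : i ≤ n), 0 < i → i < n → (derivative T).eval (p i) = 0 := by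
    intro i h h1 h2
    rw [hpdef]; simp only [dif_pos h]
    exact (hex i h).choose_spec.2.2.2 h1 h2
  -- sign alternation
  have hsign : ∀ (x y : ℝ) (i : Fin n), x < a i → a i < y →
      (∀ j : Fin n, j ≠ i → 0 < (x - a j) * (y - a j)) →
      T.eval x * T.eval y < 0 := by
    intro x y i h1 h2 h3
    rw [hTeq x, hTeq y]
    have heq : (T.leadingCoeff * ∏ j, (x - a j)) * (T.leadingCoeff * ∏ j, (y - a j))
        = (T.leadingCoeff * T.leadingCoeff) * ∏ j, ((x - a j) * (y - a j)) := by
      rw [Finset.prod_mul_distrib]; ring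
    rw [heq, ← Finset.mul_prod_erase Finset.univ _ (Finset.mem_univ i)]
    apply mul_neg_of_pos_of_neg (mul_self_pos.2 hlc)
    apply mul_neg_of_neg_of_pos
    · exact mul_neg_of_neg_of_pos (by linarith) (by linarith)
    · exact Finset.prod_pos fun j hj => h3 j (Finset.ne_of_mem_erase hj)
  -- apply the counting lemma
  have hQ0 : T - C r ≠ 0 := by
    intro h
    have : T = C r := by linear_combination (norm := ring_nf) h
    rw [this, natDegree_C] at hdeg
    omega
  have hcount : n ≤ Multiset.card (T - C r).roots := by
    apply key_count T n hn r hr1 hr2 p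
    · -- mono
      intro i hi
      have h1 : p i < a ⟨i, hi⟩ := hp2 i (by omega) ⟨i, hi⟩ (by simp)
      have h2 : a ⟨i, hi⟩ < p (i + 1) := hp1 (i + 1) (by omega) ⟨i, hi⟩ (by simp)
      linarith
    · intro i hi; exact hp3 i hi
    · -- alternation
      intro i hi
      apply hsign (p i) (p (i + 1)) ⟨i, hi⟩
      · exact hp2 i (by omega) ⟨i, hi⟩ (by simp)
      · exact hp1 (i + 1) (by omega) ⟨i, hi⟩ (by simp)
      · intro j hj
        rcases Nat.lt_or_ge (j : ℕ) i with hlt | hge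
        · have h1 : a j < p i := hp1 i (by omega) j hlt
          have h2 : a j < p (i + 1) := hp1 (i + 1) (by omega) j (by omega)
          exact mul_pos (by linarith) (by linarith)
        · have hgt : i < (j : ℕ) := by
            rcases Nat.lt_or_ge i (j : ℕ) with h | h
            · exact h
            · exact absurd (Fin.ext (by omega : (j : ℕ) = i)) hj
          have h1 : p i < a j := hp2 i (by omega) j (by omega)
          have h2 : p (i + 1) < a j := hp2 (i + 1) (by omega) j (by omega)
          exact mul_pos_of_neg_of_neg (by linarith) (by linarith)
    · intro i h1 h2; exact hp4 i (by omega) h1 h2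
    · exact hQ0
  -- T - C r splits over ℝ, so all complex roots are real
  have hQdeg : (T - C r).natDegree = n := by rw [natDegree_sub_C, hdeg]
  have hQcard : Multiset.card (T - C r).roots = (T - C r).natDegree := by
    have := (T - C r).card_roots'
    omega
  have hQsplit : (T - C r).Splits := splits_iff_card_roots.mpr hQcard
  have hzroot : ((T - C r).map (algebraMap ℝ ℂ)).eval z = 0 := by
    rw [Polynomial.map_sub, map_C, eval_sub, eval_C, hz]
    simp
  have hzmem : z ∈ ((T - C r).map (algebraMap ℝ ℂ)).roots := by
    rw [mem_roots ((Polynomial.map_ne_zero_iff (algebraMap ℝ ℂ).injective).2 hQ0)]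
    exact hzroot
  rw [hQsplit.roots_map] at hzmem
  obtain ⟨x, -, hx⟩ := Multiset.mem_map.1 hzmem
  rw [← hx]
  simp
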